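/- Fix a type j (so 0 < q̄_j := 1 − v_j/p_j < 1). There exist constants δ* ∈ ℕ and m0 ∈ ℕ, depending only on j, k, (v_1,...,v_k), (p_1,...,p_k), such that for every x ∈ ℕ^k with Σ_{n=1}^k x_n ≥ m0, setting Z := S(x) and Y := S(x + δ*·e_j), the generalized inverse CDFs satisfy F_Y^{-1}(q̄_j) − F_Z^{-1}(q̄_j) ≥ 1, where for an integer-valued random variable X one defines F_X^{-1}(q) := min{ t ∈ ℤ : P[X ≤ t] ≥ q }. -/

import Mathlib

open Finset

/-- PMF of a Binomial(m, p) random variable at value `s`. -/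
noncomputable def binomPMF (p : ℝ) (m s : ℕ) : ℝ :=
  (m.choose s : ℝ) * p ^ s * (1 - p) ^ (m - s)

/-- Expectation of `g` applied to a vector of independent binomial random variables,
where coordinate `j` is Binomial(x j, p j). -/
noncomputable def jointExp {k : ℕ} (p : Fin k → ℝ) (x : Fin k → ℕ)
    (g : (Fin k → ℕ) → ℝ) : ℝ :=
  ∑ a ∈ Fintype.piFinset (fun j => Finset.range (x j + 1)),
    (∏ j, binomPMF (p j) (x j) (a j)) * g a

open Classical in
/-- Probability of the event `E` for a vector of independent binomial random
variables, coordinate `j` being Binomial(x j, p j). -/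
noncomputable def jointProb {k : ℕ} (p : Fin k → ℝ) (x : Fin k → ℕ)
    (E : (Fin k → ℕ) → Prop) : ℝ :=
  jointExp p x (fun a => if E a then 1 else 0)

/-- P[S(x) ≥ B], where S(x) = Σ_j X_{j, x_j} is Poisson binomial. -/
noncomputable def showTail {k : ℕ} (p : Fin k → ℝ) (x : Fin k → ℕ) (B : ℕ) : ℝ :=
  jointProb p x (fun a => B ≤ ∑ j, a j)

/-- Expected compensation V_B(x) = E[(S(x) − B)^+]. -/
noncomputable def VB {k : ℕ} (p : Fin k → ℝ) (B : ℕ) (x : Fin k → ℕ) : ℝ :=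
  jointExp p x (fun a => max ((∑ j, a j : ℝ) - B) 0)

/-- Objective of the offline problem with past accepted counts `y`:
f(x) = Σ_j v_j (y_j + x_j) − V_B(y + x). -/
noncomputable def objFn {k : ℕ} (v p : Fin k → ℝ) (B : ℕ) (y x : Fin k → ℕ) : ℝ :=
  ∑ j, v j * ((y j : ℝ) + (x j : ℝ)) - VB p B (fun j => y j + x j)

/-- Feasibility for the offline problem with demand bounds `n`. -/
def Feasible {k : ℕ} (n x : Fin k → ℕ) : Prop := ∀ j, x j ≤ n j

/-- `x` is locally optimal at `j`: `x j` is the largest element of the argmax,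
over `z ∈ {0,…,n j}`, of `z · v_j − V_B(y + x + (z − x_j)·e_j)`. -/
def LocallyOpt {k : ℕ} (v p : Fin k → ℝ) (B : ℕ) (n y : Fin k → ℕ)
    (x : Fin k → ℕ) (j : Fin k) : Prop :=
  ∀ z ≤ n j,
    ((z : ℝ) * v j - VB p B (fun i => y i + Function.update x j z i)
        ≤ (x j : ℝ) * v j - VB p B (fun i => y i + x i)) ∧
    (x j < z →
      (z : ℝ) * v j - VB p B (fun i => y i + Function.update x j z i)
        < (x j : ℝ) * v j - VB p B (fun i => y i + x i))

/-- CDF of the Poisson binomial `S(x) = Σ_j X_{j,x_j}` at an integer `t`. -/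
noncomputable def pbCDF {k : ℕ} (p : Fin k → ℝ) (x : Fin k → ℕ) (t : ℤ) : ℝ :=
  jointProb p x (fun a => (∑ j, (a j : ℤ)) ≤ t)

/-- Generalized inverse CDF (quantile) of the Poisson binomial `S(x)`:
the least integer `t` with `P[S(x) ≤ t] ≥ q`. -/
noncomputable def pbQuantile {k : ℕ} (p : Fin k → ℝ) (x : Fin k → ℕ) (q : ℝ) : ℤ :=
  sInf {t : ℤ | q ≤ pbCDF p x t}

namespace QSep
open Function Classical

lemma binomPMF_nonneg {p : ℝ} (h0 : 0 ≤ p) (h1 : p ≤ 1) (m s : ℕ) :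
    0 ≤ binomPMF p m s := by
  unfold binomPMF
  have : (0:ℝ) ≤ 1 - p := by linarith
  positivity

lemma binomPMF_zero_zero (p : ℝ) : binomPMF p 0 0 = 1 := by simp [binomPMF]

lemma binomPMF_of_gt {p : ℝ} {m s : ℕ} (h : m < s) : binomPMF p m s = 0 := by
  simp [binomPMF, Nat.choose_eq_zero_of_lt h]

lemma binomPMF_sum (p : ℝ) (m : ℕ) :
    ∑ s ∈ Finset.range (m + 1), binomPMF p m s = 1 := by
  have := add_pow p (1 - p) m
  have h2 : ∑ s ∈ Finset.range (m+1), binomPMF p m s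
      = (p + (1-p))^m := by
    rw [this]
    apply Finset.sum_congr rfl
    intro s _
    unfold binomPMF; ring
  rw [h2]; norm_num

lemma binomPMF_succ_succ (p : ℝ) (M s : ℕ) :
    binomPMF p (M+1) (s+1) = p * binomPMF p M s + (1-p) * binomPMF p M (s+1) := by
  unfold binomPMF
  rcases lt_trichotomy s M with h | rfl | h
  · have h1 : M + 1 - (s+1) = M - s := by omega
    have h2 : M - s = (M - (s+1)) + 1 := by omega
    rw [Nat.choose_succ_succ, h1, h2]
    push_cast
    ring
  · rw [Nat.choose_succ_succ]
    simp [Nat.choose_succ_self, Nat.choose_self]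
    ring
  · have h1 : M + 1 < s + 1 := by omega
    have h2 : M < s + 1 := by omega
    rw [Nat.choose_eq_zero_of_lt h1, Nat.choose_eq_zero_of_lt h2,
      Nat.choose_eq_zero_of_lt h]
    simp

lemma binomPMF_succ_zero (p : ℝ) (M : ℕ) :
    binomPMF p (M+1) 0 = (1-p) * binomPMF p M 0 := by
  unfold binomPMF
  simp [pow_succ]
  ring

variable {k : ℕ}

lemma weight_nonneg {p : Fin k → ℝ} (h0 : ∀ n, 0 ≤ p n) (h1 : ∀ n, p n ≤ 1)
    (x a : Fin k → ℕ) : 0 ≤ ∏ j, binomPMF (p j) (x j) (a j) :=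
  Finset.prod_nonneg fun j _ => binomPMF_nonneg (h0 j) (h1 j) _ _

lemma jointProb_congr {p : Fin k → ℝ} {x : Fin k → ℕ} {E E' : (Fin k → ℕ) → Prop}
    (h : ∀ a, E a ↔ E' a) : jointProb p x E = jointProb p x E' := by
  unfold jointProb jointExp
  exact Finset.sum_congr rfl fun a _ => by dsimp only; rw [if_congr (h a) rfl rfl]

lemma jointProb_nonneg {p : Fin k → ℝ} (h0 : ∀ n, 0 ≤ p n) (h1 : ∀ n, p n ≤ 1)
    (x : Fin k → ℕ) (E : (Fin k → ℕ) → Prop) : 0 ≤ jointProb p x E := by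
  unfold jointProb jointExp
  apply Finset.sum_nonneg
  intro a _
  apply mul_nonneg (weight_nonneg h0 h1 x a)
  dsimp only
  split <;> norm_num

lemma jointProb_mono {p : Fin k → ℝ} (h0 : ∀ n, 0 ≤ p n) (h1 : ∀ n, p n ≤ 1)
    (x : Fin k → ℕ) {E E' : (Fin k → ℕ) → Prop} (h : ∀ a, E a → E' a) :
    jointProb p x E ≤ jointProb p x E' := by
  unfold jointProb jointExp
  apply Finset.sum_le_sum
  intro a _
  apply mul_le_mul_of_nonneg_left _ (weight_nonneg h0 h1 x a)
  dsimp only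
  by_cases hE : E a
  · rw [if_pos hE, if_pos (h a hE)]
  · rw [if_neg hE]; split <;> norm_num

lemma jointProb_total {p : Fin k → ℝ} (x : Fin k → ℕ)
    {E : (Fin k → ℕ) → Prop}
    (h : ∀ a ∈ Fintype.piFinset (fun n => Finset.range (x n + 1)), E a) :
    jointProb p x E = 1 := by
  unfold jointProb jointExp
  have h2 : ∀ a ∈ Fintype.piFinset (fun n => Finset.range (x n + 1)),
      (∏ j, binomPMF (p j) (x j) (a j)) * (if E a then (1:ℝ) else 0)
        = ∏ j, binomPMF (p j) (x j) (a j) := by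
    intro a ha
    rw [if_pos (h a ha), mul_one]
  rw [Finset.sum_congr rfl h2, ← Finset.prod_univ_sum]
  rw [Finset.prod_eq_one]
  intro j _
  exact binomPMF_sum _ _

lemma jointProb_le_one {p : Fin k → ℝ} (h0 : ∀ n, 0 ≤ p n) (h1 : ∀ n, p n ≤ 1)
    (x : Fin k → ℕ) (E : (Fin k → ℕ) → Prop) : jointProb p x E ≤ 1 := by
  have := jointProb_mono h0 h1 x (E := E) (E' := fun _ => True) (fun a _ => trivial)
  have h2 : jointProb p x (fun _ => True) = 1 := jointProb_total x (fun a _ => trivial)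
  linarith

lemma jointProb_split {p : Fin k → ℝ} (x : Fin k → ℕ)
    {E E1 E2 : (Fin k → ℕ) → Prop}
    (h : ∀ a, E a ↔ (E1 a ∨ E2 a)) (hd : ∀ a, ¬(E1 a ∧ E2 a)) :
    jointProb p x E = jointProb p x E1 + jointProb p x E2 := by
  unfold jointProb jointExp
  rw [← Finset.sum_add_distrib]
  apply Finset.sum_congr rfl
  intro a _
  rw [← mul_add]
  congr 1
  dsimp only
  by_cases h1 : E1 a <;> by_cases h2 : E2 a
  · exact absurd ⟨h1, h2⟩ (hd a)
  · rw [if_pos ((h a).2 (Or.inl h1)), if_pos h1, if_neg h2]; norm_num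
  · rw [if_pos ((h a).2 (Or.inr h2)), if_neg h1, if_pos h2]; norm_num
  · rw [if_neg, if_neg h1, if_neg h2]
    · norm_num
    · rw [h a]; tauto

lemma jointExp_cond (p : Fin k → ℝ) (x : Fin k → ℕ) (j : Fin k)
    (g : (Fin k → ℕ) → ℝ) :
    jointExp p x g = ∑ s ∈ Finset.range (x j + 1),
      binomPMF (p j) (x j) s *
        jointExp p (Function.update x j 0) (fun a => g (Function.update a j s)) := by
  unfold jointExp
  simp_rw [Finset.mul_sum]
  rw [← Finset.sum_product']
  apply Finset.sum_bij' (fun a _ => ((a j, Function.update a j 0) : ℕ × (Fin k → ℕ)))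
      (fun sa _ => Function.update sa.2 j sa.1)
  · -- hi : membership
    intro a ha
    rw [Fintype.mem_piFinset] at ha
    rw [Finset.mem_product]
    dsimp only
    constructor
    · exact ha j
    · rw [Fintype.mem_piFinset]
      intro n
      by_cases hn : n = j
      · subst hn; simp
      · rw [Function.update_of_ne hn, Function.update_of_ne hn]
        exact ha n
  · -- hj
    intro sa hsa
    rw [Finset.mem_product, Fintype.mem_piFinset] at hsa
    rw [Fintype.mem_piFinset]
    intro n
    by_cases hn : n = j
    · subst hn; rw [Function.update_self]; exact hsa.1
    · rw [Function.update_of_ne hn]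
      have := hsa.2 n
      rwa [Function.update_of_ne hn] at this
  · -- left inverse
    intro a _
    funext n
    by_cases hn : n = j
    · subst hn; simp
    · simp [Function.update_of_ne hn]
  · -- right inverse
    intro sa hsa
    rw [Finset.mem_product, Fintype.mem_piFinset] at hsa
    have hj0 : sa.2 j = 0 := by
      have := hsa.2 j
      rw [Function.update_self] at this
      simpa using this
    ext n
    · simp
    · simp only
      by_cases hn : n = j
      · subst hn; simp [hj0]
      · simp [Function.update_of_ne hn]
  · -- values
    intro a ha
    rw [Fintype.mem_piFinset] at ha
    have hupd : Function.update (Function.update a j 0) j (a j) = a := by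
      funext n
      by_cases hn : n = j
      · subst hn; simp
      · simp [Function.update_of_ne hn]
    rw [hupd]
    have hL : (∏ n, binomPMF (p n) (x n) (a n))
        = binomPMF (p j) (x j) (a j) * ∏ n ∈ Finset.univ.erase j,
            binomPMF (p n) (x n) (a n) :=
      (Finset.mul_prod_erase Finset.univ _ (Finset.mem_univ j)).symm
    have hR : (∏ n, binomPMF (p n) (Function.update x j 0 n)
          (Function.update a j 0 n))
        = ∏ n ∈ Finset.univ.erase j, binomPMF (p n) (x n) (a n) := by
      rw [← Finset.mul_prod_erase Finset.univ _ (Finset.mem_univ j)]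
      rw [Function.update_self, Function.update_self, binomPMF_zero_zero, one_mul]
      apply Finset.prod_congr rfl
      intro n hn
      rw [Function.update_of_ne (Finset.ne_of_mem_erase hn),
        Function.update_of_ne (Finset.ne_of_mem_erase hn)]
    rw [hL, hR]
    ring

/-- probability that the total show-up count satisfies `E`. -/
noncomputable def JPS (p : Fin k → ℝ) (x : Fin k → ℕ) (E : ℤ → Prop) : ℝ :=
  jointProb p x (fun a => E (∑ m, (a m : ℤ)))

lemma pbCDF_eq_JPS (p : Fin k → ℝ) (x : Fin k → ℕ) (t : ℤ) :
    pbCDF p x t = JPS p x (fun z => z ≤ t) := rfl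

/-- PMF of the total show-up count. -/
noncomputable def pmfZ (p : Fin k → ℝ) (x : Fin k → ℕ) (t : ℤ) : ℝ :=
  JPS p x (fun z => z = t)

lemma JPS_cond (p : Fin k → ℝ) (x : Fin k → ℕ) (j : Fin k) (M : ℕ) (E : ℤ → Prop) :
    JPS p (Function.update x j M) E
      = ∑ s ∈ Finset.range (M + 1), binomPMF (p j) M s *
          JPS p (Function.update x j 0) (fun z => E (z + (s : ℤ))) := by
  unfold JPS jointProb
  rw [jointExp_cond p (Function.update x j M) j]
  rw [Function.update_self, Function.update_idem]
  apply Finset.sum_congr rfl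
  intro s _
  congr 1
  unfold jointExp
  apply Finset.sum_congr rfl
  intro a ha
  rw [Fintype.mem_piFinset] at ha
  have ha0 : a j = 0 := by
    have := ha j
    rw [Function.update_self] at this
    simpa using this
  have hsum : (∑ m, ((Function.update a j s m : ℕ) : ℤ))
      = (∑ m, (a m : ℤ)) + (s : ℤ) := by
    rw [← Finset.add_sum_erase Finset.univ _ (Finset.mem_univ j),
      ← Finset.add_sum_erase Finset.univ (fun m => ((a m : ℕ) : ℤ)) (Finset.mem_univ j)]
    rw [Function.update_self, ha0]
    have : ∀ n ∈ Finset.univ.erase j,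
        ((Function.update a j s n : ℕ) : ℤ) = ((a n : ℕ) : ℤ) := by
      intro n hn
      rw [Function.update_of_ne (Finset.ne_of_mem_erase hn)]
    rw [Finset.sum_congr rfl this]
    push_cast
    ring
  dsimp only
  simp only [hsum]

lemma JPS_rec (p : Fin k → ℝ) (x : Fin k → ℕ) (j : Fin k) (M : ℕ) (E : ℤ → Prop) :
    JPS p (Function.update x j (M + 1)) E
      = (1 - p j) * JPS p (Function.update x j M) E
        + p j * JPS p (Function.update x j M) (fun z => E (z + 1)) := by
  rw [JPS_cond, JPS_cond, JPS_cond]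
  set b : ℕ → ℕ → ℝ := fun M s => binomPMF (p j) M s with hb
  set C : ℕ → ℝ := fun s =>
    JPS p (Function.update x j 0) (fun z => E (z + (s : ℤ))) with hC
  have hshift : ∀ s : ℕ,
      JPS p (Function.update x j 0) (fun z => E (z + (s : ℤ) + 1)) = C (s + 1) := by
    intro s
    show JPS p (Function.update x j 0) (fun z => E (z + (s : ℤ) + 1))
        = JPS p (Function.update x j 0) (fun z => E (z + ((s + 1 : ℕ) : ℤ)))
    congr 1
    funext z
    congr 1
    push_cast
    ring
  simp only [hshift]
  have e1 : ∑ s ∈ Finset.range (M + 2), b M s * C s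
      = ∑ s ∈ Finset.range (M + 1), b M s * C s := by
    rw [Finset.sum_range_succ]
    have : b M (M + 1) = 0 := binomPMF_of_gt (Nat.lt_succ_self M)
    rw [this, zero_mul, add_zero]
  have e2 : ∑ s ∈ Finset.range (M + 2), b M s * C s
      = (∑ s ∈ Finset.range (M + 1), b M (s + 1) * C (s + 1)) + b M 0 * C 0 :=
    Finset.sum_range_succ' _ (M + 1)
  have e3 : ∑ s ∈ Finset.range (M + 2), b (M + 1) s * C s
      = (∑ s ∈ Finset.range (M + 1), b (M + 1) (s + 1) * C (s + 1))
          + b (M + 1) 0 * C 0 :=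
    Finset.sum_range_succ' _ (M + 1)
  rw [e3]
  have e4 : ∀ s, b (M + 1) (s + 1) * C (s + 1)
      = p j * (b M s * C (s + 1)) + (1 - p j) * (b M (s + 1) * C (s + 1)) := by
    intro s
    show binomPMF (p j) (M+1) (s+1) * C (s+1) = _
    rw [binomPMF_succ_succ]
    ring
  have e5 : b (M + 1) 0 = (1 - p j) * b M 0 := binomPMF_succ_zero _ _
  rw [Finset.sum_congr rfl (fun s _ => e4 s), Finset.sum_add_distrib,
    ← Finset.mul_sum, ← Finset.mul_sum, e5, ← e1, e2]
  ring

lemma pbCDF_rec (p : Fin k → ℝ) (x : Fin k → ℕ) (j : Fin k) (M : ℕ) (t : ℤ) :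
    pbCDF p (Function.update x j (M + 1)) t
      = (1 - p j) * pbCDF p (Function.update x j M) t
        + p j * pbCDF p (Function.update x j M) (t - 1) := by
  rw [pbCDF_eq_JPS, pbCDF_eq_JPS, pbCDF_eq_JPS, JPS_rec]
  congr 1
  congr 1
  apply jointProb_congr
  intro a
  omega

lemma pmfZ_rec (p : Fin k → ℝ) (x : Fin k → ℕ) (j : Fin k) (M : ℕ) (t : ℤ) :
    pmfZ p (Function.update x j (M + 1)) t
      = (1 - p j) * pmfZ p (Function.update x j M) t
        + p j * pmfZ p (Function.update x j M) (t - 1) := by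
  unfold pmfZ
  rw [JPS_rec]
  congr 1
  congr 1
  apply jointProb_congr
  intro a
  omega

lemma pbCDF_nonneg {p : Fin k → ℝ} (h0 : ∀ n, 0 ≤ p n) (h1 : ∀ n, p n ≤ 1)
    (x : Fin k → ℕ) (t : ℤ) : 0 ≤ pbCDF p x t :=
  jointProb_nonneg h0 h1 x _

lemma pbCDF_le_one {p : Fin k → ℝ} (h0 : ∀ n, 0 ≤ p n) (h1 : ∀ n, p n ≤ 1)
    (x : Fin k → ℕ) (t : ℤ) : pbCDF p x t ≤ 1 :=
  jointProb_le_one h0 h1 x _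

lemma pmfZ_nonneg {p : Fin k → ℝ} (h0 : ∀ n, 0 ≤ p n) (h1 : ∀ n, p n ≤ 1)
    (x : Fin k → ℕ) (t : ℤ) : 0 ≤ pmfZ p x t :=
  jointProb_nonneg h0 h1 x _

lemma pbCDF_mono {p : Fin k → ℝ} (h0 : ∀ n, 0 ≤ p n) (h1 : ∀ n, p n ≤ 1)
    (x : Fin k → ℕ) {t t' : ℤ} (h : t ≤ t') : pbCDF p x t ≤ pbCDF p x t' :=
  jointProb_mono h0 h1 x (fun a ha => le_trans ha h)

lemma pbCDF_split (p : Fin k → ℝ) (x : Fin k → ℕ) (t : ℤ) :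
    pbCDF p x t = pbCDF p x (t - 1) + pmfZ p x t := by
  unfold pbCDF pmfZ JPS
  apply jointProb_split x (fun a => by omega) (fun a => by omega)

lemma pbCDF_of_neg (p : Fin k → ℝ) (x : Fin k → ℕ) {t : ℤ} (ht : t < 0) :
    pbCDF p x t = 0 := by
  unfold pbCDF jointProb jointExp
  apply Finset.sum_eq_zero
  intro a _
  have : ¬ ((∑ j, ((a j : ℕ) : ℤ)) ≤ t) := by
    have : (0:ℤ) ≤ ∑ j, ((a j : ℕ) : ℤ) :=
      Finset.sum_nonneg fun j _ => Int.natCast_nonneg _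
    omega
  dsimp only
  rw [if_neg this, mul_zero]

lemma pbCDF_of_ge (p : Fin k → ℝ) (x : Fin k → ℕ) {t : ℤ}
    (ht : ((∑ n, x n : ℕ) : ℤ) ≤ t) : pbCDF p x t = 1 := by
  unfold pbCDF
  apply jointProb_total
  intro a ha
  rw [Fintype.mem_piFinset] at ha
  have : ∀ n, a n ≤ x n := by
    intro n
    have := ha n
    rw [Finset.mem_range] at this
    omega
  have hle : (∑ n, ((a n : ℕ) : ℤ)) ≤ ((∑ n, x n : ℕ) : ℤ) := by
    push_cast
    exact Finset.sum_le_sum fun n _ => by exact_mod_cast this n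
  omega

lemma pmfZ_of_out (p : Fin k → ℝ) (x : Fin k → ℕ) {t : ℤ}
    (ht : t < 0 ∨ ((∑ n, x n : ℕ) : ℤ) < t) : pmfZ p x t = 0 := by
  unfold pmfZ JPS jointProb jointExp
  apply Finset.sum_eq_zero
  intro a ha
  rw [Fintype.mem_piFinset] at ha
  have h0 : (0:ℤ) ≤ ∑ j, ((a j : ℕ) : ℤ) :=
    Finset.sum_nonneg fun j _ => Int.natCast_nonneg _
  have hle : (∑ n, ((a n : ℕ) : ℤ)) ≤ ((∑ n, x n : ℕ) : ℤ) := by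
    push_cast
    apply Finset.sum_le_sum
    intro n _
    have := ha n
    rw [Finset.mem_range] at this
    exact_mod_cast Nat.lt_succ_iff.mp this
  have : ¬ ((∑ j, ((a j : ℕ) : ℤ)) = t) := by omega
  dsimp only
  rw [if_neg this, mul_zero]

lemma pbCDF_eq_sum_pmfZ (p : Fin k → ℝ) (x : Fin k → ℕ) (n : ℕ) :
    pbCDF p x (n : ℤ) = ∑ s ∈ Finset.range (n + 1), pmfZ p x (s : ℤ) := by
  induction n with
  | zero =>
    rw [pbCDF_split, pbCDF_of_neg p x (by norm_num : ((0:ℕ):ℤ) - 1 < 0),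
      Finset.sum_range_one]
    norm_num
  | succ n ih =>
    rw [pbCDF_split, Finset.sum_range_succ, ← ih]
    have : ((n:ℤ) + 1) - 1 = (n:ℤ) := by ring
    push_cast
    rw [this]

/-- Support and log-concavity of the Poisson binomial pmf. -/
def Good (p : Fin k → ℝ) (x : Fin k → ℕ) : Prop :=
  (∀ s : ℤ, 0 ≤ s → s ≤ ((∑ n, x n : ℕ) : ℤ) → 0 < pmfZ p x s) ∧
  (∀ s : ℤ, pmfZ p x (s - 1) * pmfZ p x (s + 1) ≤ pmfZ p x s ^ 2)

lemma pmfZ_zero_x (p : Fin k → ℝ) (s : ℤ) :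
    pmfZ p (fun _ => 0) s = if s = 0 then 1 else 0 := by
  unfold pmfZ JPS jointProb jointExp
  have hsingle : Fintype.piFinset (fun n : Fin k => Finset.range ((fun _ => 0) n + 1))
      = {fun _ => 0} := by
    apply Finset.eq_singleton_iff_unique_mem.mpr
    constructor
    · rw [Fintype.mem_piFinset]
      intro n
      simp
    · intro a ha
      rw [Fintype.mem_piFinset] at ha
      funext n
      have := ha n
      rw [Finset.mem_range] at this
      simp only at this ⊢
      omega
  rw [hsingle, Finset.sum_singleton]
  simp only [binomPMF_zero_zero, Finset.prod_const_one, one_mul,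
    Nat.cast_zero, Finset.sum_const_zero]
  split <;> split <;> first | rfl | omega

lemma good_zero (p : Fin k → ℝ) : Good p (fun _ => 0) := by
  constructor
  · intro s h0 h1
    have hs : s = 0 := by
      have h1' : s ≤ 0 := by simpa using h1
      omega
    rw [pmfZ_zero_x, if_pos hs]
    norm_num
  · intro s
    rw [pmfZ_zero_x, pmfZ_zero_x, pmfZ_zero_x]
    by_cases h1 : s - 1 = 0
    · have : ¬ (s + 1 = 0) := by omega
      rw [if_pos h1, if_neg this, mul_zero]
      positivity
    · rw [if_neg h1, zero_mul]
      positivity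

lemma good_step {p : Fin k → ℝ} (h0 : ∀ n, 0 < p n) (h1 : ∀ n, p n < 1)
    (y : Fin k → ℕ) (j : Fin k) (hgood : Good p y) :
    Good p (Function.update y j (y j + 1)) := by
  have h0' : ∀ n, 0 ≤ p n := fun n => (h0 n).le
  have h1' : ∀ n, p n ≤ 1 := fun n => (h1 n).le
  obtain ⟨hpos, hlc⟩ := hgood
  have hrec : ∀ t : ℤ, pmfZ p (Function.update y j (y j + 1)) t
      = (1 - p j) * pmfZ p y t + p j * pmfZ p y (t - 1) := by
    intro t
    have := pmfZ_rec p y j (y j) t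
    rwa [Function.update_eq_self] at this
  have hsum : ((∑ n, Function.update y j (y j + 1) n : ℕ) : ℤ)
      = ((∑ n, y n : ℕ) : ℤ) + 1 := by
    rw [Finset.sum_update_of_mem (Finset.mem_univ j),
      ← Finset.add_sum_erase Finset.univ y (Finset.mem_univ j),
      Finset.erase_eq]
    push_cast
    ring
  have hnn : ∀ t : ℤ, 0 ≤ pmfZ p y t := pmfZ_nonneg h0' h1' y
  set N : ℤ := ((∑ n, y n : ℕ) : ℤ) with hN
  have hzero : ∀ t : ℤ, t < 0 ∨ N < t → pmfZ p y t = 0 := by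
    intro t ht
    exact pmfZ_of_out p y ht
  constructor
  · intro s hs0 hs1
    rw [hrec]
    rw [hsum] at hs1
    rcases eq_or_lt_of_le hs0 with h | h
    · have : 0 < pmfZ p y s := hpos s hs0 (by omega)
      have : 0 ≤ p j * pmfZ p y (s - 1) := mul_nonneg (h0' j) (hnn _)
      nlinarith [h1 j, hpos s hs0 (by omega : s ≤ N)]
    · by_cases hsN : s ≤ N
      · have hp1 : 0 < pmfZ p y s := hpos s hs0 hsN
        have : 0 ≤ p j * pmfZ p y (s - 1) := mul_nonneg (h0' j) (hnn _)
        nlinarith [h1 j]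
      · have hs' : s = N + 1 := by omega
        have hp1 : 0 < pmfZ p y (s - 1) := hpos _ (by omega) (by omega)
        have hz : pmfZ p y s = 0 := hzero s (by omega)
        rw [hz]
        have := h0 j
        nlinarith
  · intro s
    rw [hrec, hrec, hrec]
    have key : pmfZ p y (s - 2) * pmfZ p y (s + 1)
        ≤ pmfZ p y s * pmfZ p y (s - 1) := by
      by_cases hz2 : pmfZ p y (s - 2) = 0
      · rw [hz2, zero_mul]
        exact mul_nonneg (hnn _) (hnn _)
      by_cases hz1 : pmfZ p y (s + 1) = 0
      · rw [hz1, mul_zero]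
        exact mul_nonneg (hnn _) (hnn _)
      have hb2 : 0 ≤ s - 2 ∧ s - 2 ≤ N := by
        by_contra hcon
        exact hz2 (hzero _ (by omega))
      have hb1 : 0 ≤ s + 1 ∧ s + 1 ≤ N := by
        by_contra hcon
        exact hz1 (hzero _ (by omega))
      have hps : 0 < pmfZ p y s := hpos s (by omega) (by omega)
      have hps1 : 0 < pmfZ p y (s - 1) := hpos _ (by omega) (by omega)
      have l1 := hlc (s - 1)
      have l2 := hlc s
      have e1 : s - 1 - 1 = s - 2 := by ring
      have e2 : s - 1 + 1 = s := by ring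
      rw [e1, e2] at l1
      -- l1 : pmfZ (s-2) * pmfZ s ≤ pmfZ (s-1)^2
      -- l2 : pmfZ (s-1) * pmfZ (s+1) ≤ pmfZ s ^2
      have hmul : (pmfZ p y (s-2) * pmfZ p y s) * (pmfZ p y (s-1) * pmfZ p y (s+1))
          ≤ pmfZ p y (s-1)^2 * pmfZ p y s ^ 2 :=
        mul_le_mul l1 l2 (mul_nonneg (hnn _) (hnn _)) (by positivity)
      have hposm : 0 < pmfZ p y (s-1) * pmfZ p y s := mul_pos hps1 hps
      have : (pmfZ p y (s-2) * pmfZ p y (s+1)) * (pmfZ p y (s-1) * pmfZ p y s)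
          ≤ (pmfZ p y s * pmfZ p y (s-1)) * (pmfZ p y (s-1) * pmfZ p y s) := by
        nlinarith
      exact le_of_mul_le_mul_right (by nlinarith) hposm
    have l1 := hlc s
    have l2 := hlc (s - 1)
    have e1 : s - 1 - 1 = s - 2 := by ring
    have e2 : s - 1 + 1 = s := by ring
    have e3 : s + 1 - 1 = s := by ring
    rw [e1, e2] at l2
    rw [e3, e1]
    have hp0 := h0' j
    have hp1 : 0 ≤ 1 - p j := by linarith [h1' j]
    nlinarith [mul_nonneg (mul_nonneg hp1 hp1) (sub_nonneg.mpr l1),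
      mul_nonneg (mul_nonneg hp0 hp0) (sub_nonneg.mpr l2),
      mul_nonneg (mul_nonneg hp1 hp0) (sub_nonneg.mpr key)]

lemma good_all {p : Fin k → ℝ} (h0 : ∀ n, 0 < p n) (h1 : ∀ n, p n < 1)
    (x : Fin k → ℕ) : Good p x := by
  suffices h : ∀ N : ℕ, ∀ x : Fin k → ℕ, (∑ n, x n) = N → Good p x by
    exact h _ x rfl
  intro N
  induction N with
  | zero =>
    intro x hx
    have : x = fun _ => 0 := by
      funext n
      have : x n ≤ ∑ m, x m := Finset.single_le_sum (fun m _ => Nat.zero_le _)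
        (Finset.mem_univ n)
      omega
    rw [this]
    exact good_zero p
  | succ N ih =>
    intro x hx
    have hex : ∃ j, 0 < x j := by
      by_contra hcon
      push_neg at hcon
      have : (∑ n, x n) = 0 := Finset.sum_eq_zero fun n _ => by
        have := hcon n; omega
      omega
    obtain ⟨j, hj⟩ := hex
    set y : Fin k → ℕ := Function.update x j (x j - 1) with hy
    have hysum : (∑ n, y n) = N := by
      rw [hy, Finset.sum_update_of_mem (Finset.mem_univ j)]
      have : (∑ n, x n) = x j + ∑ n ∈ Finset.univ.erase j, x n :=
        (Finset.add_sum_erase Finset.univ x (Finset.mem_univ j)).symm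
      rw [Finset.erase_eq] at this
      omega
    have hgy := ih y hysum
    have hxy : Function.update y j (y j + 1) = x := by
      funext n
      by_cases hn : n = j
      · subst hn
        rw [hy]
        simp only [Function.update_self]
        omega
      · rw [hy]
        simp only [Function.update_of_ne hn]
    have := good_step h0 h1 y j hgy
    rwa [hxy] at this

lemma pbCDF_bound2 {p : Fin k → ℝ} (h0 : ∀ n, 0 ≤ p n) (h1 : ∀ n, p n ≤ 1)
    (x : Fin k → ℕ) (j : Fin k) (δ : ℕ) (t : ℤ) :
    pbCDF p (Function.update x j (x j + δ)) t
      ≤ (1 - p j)^δ * pbCDF p x t + (1 - (1 - p j)^δ) * pbCDF p x (t - 1) := by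
  induction δ generalizing t with
  | zero =>
    rw [Nat.add_zero, Function.update_eq_self]
    norm_num
  | succ δ ih =>
    have hr := pbCDF_rec p x j (x j + δ) t
    have e0 : x j + (δ + 1) = x j + δ + 1 := rfl
    rw [e0, hr]
    have hA := ih t
    have hB := ih (t - 1)
    have hp0 := h0 j
    have hp1 : (0:ℝ) ≤ 1 - p j := by linarith [h1 j]
    have hc0 : (0:ℝ) ≤ (1 - p j)^δ := pow_nonneg hp1 δ
    have hc1 : (1 - p j)^δ ≤ 1 := pow_le_one₀ hp1 (by linarith)
    have hmono : pbCDF p x (t - 1 - 1) ≤ pbCDF p x (t - 1) :=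
      pbCDF_mono h0 h1 x (by omega)
    have h3 : (1 - p j) * pbCDF p (Function.update x j (x j + δ)) t
        ≤ (1 - p j) * ((1 - p j)^δ * pbCDF p x t
            + (1 - (1 - p j)^δ) * pbCDF p x (t - 1)) :=
      mul_le_mul_of_nonneg_left hA hp1
    have h4 : p j * pbCDF p (Function.update x j (x j + δ)) (t - 1)
        ≤ p j * ((1 - p j)^δ * pbCDF p x (t - 1)
            + (1 - (1 - p j)^δ) * pbCDF p x (t - 1 - 1)) :=
      mul_le_mul_of_nonneg_left hB hp0
    have h5 : p j * (1 - (1 - p j)^δ) * pbCDF p x (t - 1 - 1)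
        ≤ p j * (1 - (1 - p j)^δ) * pbCDF p x (t - 1) :=
      mul_le_mul_of_nonneg_left hmono (mul_nonneg hp0 (by linarith))
    rw [pow_succ]
    nlinarith

lemma bound3_R_nonneg {q : ℝ} (h0 : 0 ≤ q) (h1 : q ≤ 1) (δ : ℕ) :
    0 ≤ 1 - (1 - q)^(δ+1) - ((δ+1 : ℕ) : ℝ) * q * (1 - q)^δ := by
  induction δ with
  | zero => norm_num
  | succ δ ih =>
    have e : 1 - (1 - q)^(δ+2) - ((δ+2 : ℕ) : ℝ) * q * (1 - q)^(δ+1)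
        = (1 - (1 - q)^(δ+1) - ((δ+1 : ℕ) : ℝ) * q * (1 - q)^δ)
          + ((δ+1 : ℕ) : ℝ) * q^2 * (1 - q)^δ := by
      push_cast
      ring
    rw [e]
    have : (0:ℝ) ≤ ((δ+1 : ℕ) : ℝ) * q^2 * (1 - q)^δ :=
      mul_nonneg (mul_nonneg (Nat.cast_nonneg _) (sq_nonneg q))
        (pow_nonneg (by linarith) δ)
    linarith

lemma pbCDF_bound3 {p : Fin k → ℝ} (h0 : ∀ n, 0 ≤ p n) (h1 : ∀ n, p n ≤ 1)
    (x : Fin k → ℕ) (j : Fin k) (δ : ℕ) (t : ℤ) :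
    pbCDF p (Function.update x j (x j + (δ+1))) t
      ≤ (1 - p j)^(δ+1) * pbCDF p x t
        + ((δ+1 : ℕ) : ℝ) * p j * (1 - p j)^δ * pbCDF p x (t - 1)
        + (1 - (1 - p j)^(δ+1) - ((δ+1 : ℕ) : ℝ) * p j * (1 - p j)^δ)
            * pbCDF p x (t - 2) := by
  induction δ generalizing t with
  | zero =>
    have hr := pbCDF_rec p x j (x j) t
    rw [Function.update_eq_self] at hr
    rw [hr]
    norm_num
  | succ δ ih =>
    have hr := pbCDF_rec p x j (x j + (δ+1)) t
    have e0 : x j + (δ + 1 + 1) = x j + (δ + 1) + 1 := rfl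
    rw [e0, hr]
    have hp0 := h0 j
    have hp1 : (0:ℝ) ≤ 1 - p j := by linarith [h1 j]
    have hA := ih t
    have hB := ih (t - 1)
    have e1 : t - 1 - 1 = t - 2 := by ring
    have e2 : t - 1 - 2 = t - 3 := by ring
    rw [e1, e2] at hB
    have hRn := bound3_R_nonneg hp0 (h1 j) δ
    have hmono : pbCDF p x (t - 3) ≤ pbCDF p x (t - 2) :=
      pbCDF_mono h0 h1 x (by omega)
    have ep1 : (1 - p j)^(δ+1) = (1 - p j)^δ * (1 - p j) := pow_succ _ _
    have ep2 : (1 - p j)^(δ+1+1) = (1 - p j)^δ * (1 - p j) * (1 - p j) := by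
      rw [pow_succ, pow_succ]
    rw [ep1] at hA hB hRn
    rw [ep2, ep1]
    push_cast at hA hB hRn ⊢
    have h3 := mul_le_mul_of_nonneg_left hA hp1
    have h4 := mul_le_mul_of_nonneg_left hB hp0
    have hRn' : (0:ℝ) ≤ p j * (1 - (1 - p j)^δ * (1 - p j)
        - ((δ:ℝ) + 1) * p j * (1 - p j)^δ) := mul_nonneg hp0 hRn
    have h5 := mul_le_mul_of_nonneg_left hmono hRn'
    nlinarith [h3, h4, h5]

lemma pmfZ_cross {p : Fin k → ℝ} (h0 : ∀ n, 0 ≤ p n) (h1 : ∀ n, p n ≤ 1)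
    {x : Fin k → ℕ} (hg : Good p x) {t : ℤ}
    (htN : t ≤ ((∑ n, x n : ℕ) : ℤ)) :
    ∀ i : ℕ, pmfZ p x (t - 1 - i) * pmfZ p x t ≤ pmfZ p x (t - i) * pmfZ p x (t - 1) := by
  obtain ⟨hpos, hlc⟩ := hg
  have hnn : ∀ u : ℤ, 0 ≤ pmfZ p x u := pmfZ_nonneg h0 h1 x
  intro i
  induction i with
  | zero =>
    norm_num
    rw [mul_comm]
  | succ i ih =>
    by_cases hz : pmfZ p x (t - 1 - i) = 0
    · -- then t - 1 - i < 0, so t - 1 - (i+1) < 0 too and lhs vanishes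
      have hneg : t - 1 - i < 0 := by
        by_contra hcon
        push_neg at hcon
        have := hpos (t - 1 - i) hcon (by omega)
        linarith
      have : pmfZ p x (t - 1 - (i+1 : ℕ)) = 0 := by
        apply pmfZ_of_out
        left
        push_cast
        omega
      rw [this, zero_mul]
      exact mul_nonneg (hnn _) (hnn _)
    · have hzpos : 0 < pmfZ p x (t - 1 - i) := lt_of_le_of_ne (hnn _) (Ne.symm hz)
      have hlci := hlc (t - 1 - i)
      have e1 : t - 1 - i - 1 = t - 1 - (i+1 : ℕ) := by push_cast; ring
      have e2 : t - 1 - i + 1 = t - i := by push_cast; ring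
      rw [e1, e2] at hlci
      -- hlci : f(t-1-(i+1)) * f(t-i) ≤ f(t-1-i)^2
      -- ih : f(t-1-i) * f t ≤ f(t-i) * f(t-1)
      -- want : f(t-1-(i+1)) * f t ≤ f(t-(i+1)) * f(t-1)
      have e3 : t - (i+1 : ℕ) = t - 1 - i := by push_cast; ring
      rw [e3]
      have step1 : pmfZ p x (t - 1 - (i+1 : ℕ)) * pmfZ p x t * pmfZ p x (t - 1 - i)
          ≤ pmfZ p x (t - 1 - i) * pmfZ p x (t - 1) * pmfZ p x (t - 1 - i) := by
        nlinarith [mul_le_mul_of_nonneg_left ih (hnn (t - 1 - (i+1 : ℕ))),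
          mul_le_mul_of_nonneg_right hlci (hnn (t - 1))]
      exact le_of_mul_le_mul_right step1 hzpos

lemma pmfZ_decay {p : Fin k → ℝ} (h0 : ∀ n, 0 ≤ p n) (h1 : ∀ n, p n ≤ 1)
    {x : Fin k → ℕ} (hg : Good p x) {t : ℤ}
    (htN : t ≤ ((∑ n, x n : ℕ) : ℤ))
    {ε : ℝ} (hε : 0 ≤ ε) (hft : 0 < pmfZ p x t)
    (hsmall : pmfZ p x (t - 1) ≤ ε * pmfZ p x t) :
    ∀ i : ℕ, pmfZ p x (t - 1 - i) ≤ ε^(i+1) * pmfZ p x t := by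
  have hnn : ∀ u : ℤ, 0 ≤ pmfZ p x u := pmfZ_nonneg h0 h1 x
  intro i
  induction i with
  | zero =>
    have e : t - 1 - ((0:ℕ):ℤ) = t - 1 := by norm_num
    rw [e, pow_one]
    exact hsmall
  | succ i ih =>
    have hcross := pmfZ_cross h0 h1 hg htN (i + 1)
    have e3 : t - (i+1 : ℕ) = t - 1 - i := by push_cast; ring
    rw [e3] at hcross
    -- hcross : f(t-1-(i+1)) * f t ≤ f(t-1-i) * f(t-1)
    have step1 : pmfZ p x (t - 1 - i) * pmfZ p x (t - 1)
        ≤ (ε^(i+1) * pmfZ p x t) * (ε * pmfZ p x t) :=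
      mul_le_mul ih hsmall (hnn _) (by positivity)
    have step2 : pmfZ p x (t - 1 - (i+1 : ℕ)) * pmfZ p x t
        ≤ (ε^(i+1+1) * pmfZ p x t) * pmfZ p x t := by
      calc pmfZ p x (t - 1 - (i+1 : ℕ)) * pmfZ p x t
          ≤ pmfZ p x (t - 1 - i) * pmfZ p x (t - 1) := hcross
        _ ≤ (ε^(i+1) * pmfZ p x t) * (ε * pmfZ p x t) := step1
        _ = (ε^(i+1+1) * pmfZ p x t) * pmfZ p x t := by ring
    exact le_of_mul_le_mul_right step2 hft

end QSep

open QSep in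
/-- **Claim 1 (quantile separation).**  Fix a type `j`.  There are constants
`δ*` and `m0` (depending only on `j`, `k`, `v`, `p`) such that for every `x` with
`Σ_n x_n ≥ m0`, with `Z := S(x)` and `Y := S(x + δ*·e_j)`,
`F_Y^{-1}(q̄_j) − F_Z^{-1}(q̄_j) ≥ 1`, where `q̄_j = 1 − v_j/p_j`. -/
theorem quantile_separation {k : ℕ} (v p : Fin k → ℝ)
    (hk : 1 ≤ k)
    (hp : ∀ j, 0 < p j ∧ p j < 1)
    (hrat : ∀ j, ∃ q : ℚ, p j = (q : ℝ))
    (hv : ∀ j, 0 < v j ∧ v j < p j)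
    (j : Fin k) :
    ∃ δs m0 : ℕ, ∀ x : Fin k → ℕ, m0 ≤ ∑ n, x n →
      pbQuantile p x (1 - v j / p j) + 1
        ≤ pbQuantile p (fun m => x m + if m = j then δs else 0) (1 - v j / p j) := by
  classical
  have hpj0 : 0 < p j := (hp j).1
  have hpj1 : p j < 1 := (hp j).2
  have h0 : ∀ n, 0 ≤ p n := fun n => (hp n).1.le
  have h1 : ∀ n, p n ≤ 1 := fun n => (hp n).2.le
  set q : ℝ := 1 - v j / p j with hqdef
  have hq0 : 0 < q := by
    have : v j / p j < 1 := (div_lt_one hpj0).mpr (hv j).2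
    rw [hqdef]; linarith
  have hq1 : q < 1 := by
    have : 0 < v j / p j := div_pos (hv j).1 hpj0
    rw [hqdef]; linarith
  set ε : ℝ := q / 8 with hεdef
  set r : ℝ := 1 - p j with hrdef
  have hr0 : 0 ≤ r := by rw [hrdef]; linarith
  have hr1 : r < 1 := by rw [hrdef]; linarith
  -- find N such that r^(N+1) + (N+1) p_j r^N is small
  have hsum1 : Summable (fun n : ℕ => (n : ℝ) * r ^ n) := by
    have := summable_pow_mul_geometric_of_norm_lt_one (R := ℝ) 1
      (r := r) (by rw [Real.norm_eq_abs, abs_of_nonneg hr0]; exact hr1)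
    simpa using this
  have hsum2 : Summable (fun n : ℕ => r ^ n) := summable_geometric_of_lt_one hr0 hr1
  have t1 := hsum1.tendsto_atTop_zero
  have t2 := hsum2.tendsto_atTop_zero
  have t3 := (t2.const_mul r).add ((t1.add t2).const_mul (p j))
  have htend : Filter.Tendsto (fun N : ℕ => r ^ (N + 1) + ((N : ℝ) + 1) * p j * r ^ N)
      Filter.atTop (nhds 0) := by
    have h4 : Filter.Tendsto
        (fun N : ℕ => r * r ^ N + p j * ((N : ℝ) * r ^ N + r ^ N))
        Filter.atTop (nhds 0) := by simpa using t3
    apply h4.congr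
    intro N
    ring
  have hc : (0 : ℝ) < min (1 / 2) (q / 16) :=
    lt_min (by norm_num) (div_pos hq0 (by norm_num))
  obtain ⟨N, hN⟩ := (htend.eventually_lt_const hc).exists
  refine ⟨N + 1, 0, ?_⟩
  intro x _
  set P0 : ℝ := r ^ (N + 1) with hP0def
  set P1 : ℝ := ((N : ℝ) + 1) * p j * r ^ N with hP1def
  set R : ℝ := 1 - P0 - P1 with hRdef
  have hP0nn : 0 ≤ P0 := by rw [hP0def]; positivity
  have hP1nn : 0 ≤ P1 := by
    rw [hP1def]
    have := h0 j
    positivity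
  have hP0q : P0 ≤ q / 16 := by
    have := min_le_right (1/2 : ℝ) (q/16)
    linarith [hN]
  have hPhalf : P0 + P1 ≤ 1 / 2 := by
    have := min_le_left (1/2 : ℝ) (q/16)
    linarith [hN]
  have hRnn : 0 ≤ R := by
    have := bound3_R_nonneg (h0 j) (h1 j) N
    rw [hRdef, hP0def, hP1def, hrdef]
    push_cast at this ⊢
    linarith
  have hRhalf : 1 / 2 ≤ R := by rw [hRdef]; linarith
  -- quantile of x
  set F : ℤ → ℝ := pbCDF p x with hFdef
  set f : ℤ → ℝ := pmfZ p x with hfdef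
  set S : Set ℤ := {u : ℤ | q ≤ pbCDF p x u} with hSdef
  have hSne : S.Nonempty := by
    refine ⟨((∑ n, x n : ℕ) : ℤ), ?_⟩
    rw [hSdef]
    show q ≤ pbCDF p x _
    rw [pbCDF_of_ge p x le_rfl]
    linarith
  have hSlb : ∀ u ∈ S, (0:ℤ) ≤ u := by
    intro u hu
    rw [hSdef] at hu
    by_contra hcon
    push_neg at hcon
    rw [Set.mem_setOf_eq, pbCDF_of_neg p x hcon] at hu
    linarith
  have hSbdd : BddBelow S := ⟨0, fun u hu => hSlb u hu⟩
  have htq : pbQuantile p x q = sInf S := rfl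
  set t : ℤ := sInf S with htdef
  have htmem : q ≤ F t := Int.csInf_mem hSne hSbdd
  have ht1 : F (t - 1) < q := by
    by_contra hcon
    push_neg at hcon
    have : t - 1 ∈ S := hcon
    have := csInf_le hSbdd this
    omega
  have ht0 : (0:ℤ) ≤ t := hSlb t (Int.csInf_mem hSne hSbdd)
  have htN : t ≤ ((∑ n, x n : ℕ) : ℤ) := by
    by_contra hcon
    push_neg at hcon
    have : F (t - 1) = 1 := pbCDF_of_ge p x (by omega)
    rw [this] at ht1
    linarith
  have hsplit : F t = F (t - 1) + f t := pbCDF_split p x t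
  have hsplit1 : F (t - 1) = F (t - 2) + f (t - 1) := by
    have := pbCDF_split p x (t - 1)
    rwa [show t - 1 - 1 = t - 2 by ring] at this
  have hft : 0 < f t := by linarith
  have hFt_le1 : F t ≤ 1 := pbCDF_le_one h0 h1 x t
  have hFt1nn : 0 ≤ F (t - 1) := pbCDF_nonneg h0 h1 x _
  have hft_le1 : f t ≤ 1 := by linarith
  have hgood : Good p x := good_all (fun n => (hp n).1) (fun n => (hp n).2) x
  -- the shifted vector
  set x' : Fin k → ℕ := Function.update x j (x j + (N + 1)) with hx'def
  have hfun : (fun m => x m + if m = j then N + 1 else 0) = x' := by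
    funext m
    by_cases hm : m = j
    · subst hm; simp [hx'def]
    · simp [hx'def, Function.update_of_ne hm, hm]
  rw [hfun]
  clear_value x' t S f F R P1 P0 r ε q
  -- main claim : pbCDF p x' t < q
  have main : pbCDF p x' t < q := by
    by_cases hbig : ε * f t ≤ f (t - 1)
    · -- use the three-term bound
      have hb3 := pbCDF_bound3 h0 h1 x j N t
      rw [← hx'def] at hb3
      rw [← hrdef] at hb3
      push_cast at hb3
      rw [← hP0def, ← hP1def, ← hRdef, ← hFdef] at hb3
      have hb3' : pbCDF p x' t ≤ P0 * F t + P1 * F (t - 1) + R * F (t - 2) := hb3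
      have key : P0 * f t ≤ R * f (t - 1) := by
        have h5 : P0 ≤ ε * R := by
          rw [hεdef]
          have h51 : (q / 8) * (1 / 2) ≤ (q / 8) * R :=
            mul_le_mul_of_nonneg_left hRhalf (by linarith)
          linarith
        have h6 : P0 * f t ≤ (ε * R) * f t := mul_le_mul_of_nonneg_right h5 hft.le
        have h7 : (ε * R) * f t = R * (ε * f t) := by ring
        have h8 : R * (ε * f t) ≤ R * f (t - 1) := mul_le_mul_of_nonneg_left hbig hRnn
        linarith
      have hFt2 : F (t - 2) = F (t - 1) - f (t - 1) := by linarith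
      rw [hFt2] at hb3'
      have : P0 * F t + P1 * F (t - 1) + R * (F (t - 1) - f (t - 1))
          = F (t - 1) + (P0 * f t - R * f (t - 1)) := by
        rw [hRdef]
        rw [hsplit]
        ring
      rw [this] at hb3'
      linarith
    · -- small left mass near the quantile
      push_neg at hbig
      have hεnn : 0 ≤ ε := by rw [hεdef]; linarith
      have hft' : 0 < pmfZ p x t := by rw [← hfdef]; exact hft
      have hsmall' : pmfZ p x (t - 1) ≤ ε * pmfZ p x t := by
        rw [← hfdef]; exact hbig.le
      have hdecay := pmfZ_decay h0 h1 hgood htN hεnn hft' hsmall'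
      have hFt1 : F (t - 1) ≤ q / 4 := by
        rcases le_or_gt t 0 with hle | hgt
        · have : F (t - 1) = 0 := by
            rw [hFdef]
            exact pbCDF_of_neg p x (by omega)
          linarith
        · set m : ℕ := (t - 1).toNat with hmdef
          have hm : (m : ℤ) = t - 1 := Int.toNat_of_nonneg (by omega)
          have hFm : F (t - 1) = ∑ s ∈ Finset.range (m + 1), f (s : ℤ) := by
            rw [hFdef, hfdef, ← hm]
            exact pbCDF_eq_sum_pmfZ p x m
          have hbd : ∀ s ∈ Finset.range (m + 1),
              f (s : ℤ) ≤ ε ^ ((m - s) + 1) * f t := by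
            intro s hs
            rw [Finset.mem_range] at hs
            have he : t - 1 - ((m - s : ℕ) : ℤ) = (s : ℤ) := by
              have hsm : s ≤ m := by omega
              push_cast [hsm]
              omega
            have := hdecay (m - s)
            rw [hfdef]
            rwa [he] at this
          have hsum_le : ∑ s ∈ Finset.range (m + 1), f (s : ℤ)
              ≤ ∑ s ∈ Finset.range (m + 1), ε ^ ((m - s) + 1) * f t :=
            Finset.sum_le_sum hbd
          have hrefl : ∑ s ∈ Finset.range (m + 1), ε ^ ((m - s) + 1) * f t
              = ∑ i ∈ Finset.range (m + 1), ε ^ (i + 1) * f t := by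
            rw [← Finset.sum_range_reflect]
            apply Finset.sum_congr rfl
            intro i hi
            rw [Finset.mem_range] at hi
            congr 2
            omega
          have hgeom : ∑ i ∈ Finset.range (m + 1), ε ^ (i + 1) * f t
              ≤ 2 * ε * f t := by
            have hsum_pow : (∑ i ∈ Finset.range (m + 1), ε ^ i) * (1 - ε)
                = 1 - ε ^ (m + 1) := by
              linear_combination (-1 : ℝ) * geom_sum_mul ε (m + 1)
            have hε_half : ε ≤ 1 / 2 := by rw [hεdef]; linarith
            have hpow_nn : (0:ℝ) ≤ ε ^ (m + 1) := pow_nonneg hεnn _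
            have hsnn : (0:ℝ) ≤ ∑ i ∈ Finset.range (m + 1), ε ^ i :=
              Finset.sum_nonneg fun i _ => pow_nonneg hεnn i
            have hsum_le2 : ∑ i ∈ Finset.range (m + 1), ε ^ i ≤ 2 := by
              have h52 : (∑ i ∈ Finset.range (m + 1), ε ^ i) * (1/2)
                  ≤ (∑ i ∈ Finset.range (m + 1), ε ^ i) * (1 - ε) :=
                mul_le_mul_of_nonneg_left (by linarith) hsnn
              linarith
            have : ∑ i ∈ Finset.range (m + 1), ε ^ (i + 1) * f t
                = (∑ i ∈ Finset.range (m + 1), ε ^ i) * (ε * f t) := by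
              rw [Finset.sum_mul]
              apply Finset.sum_congr rfl
              intro i _
              ring
            rw [this]
            have hεft : 0 ≤ ε * f t := mul_nonneg hεnn hft.le
            have h53 := mul_le_mul_of_nonneg_right hsum_le2 hεft
            linarith
          have h2ε : 2 * ε * f t ≤ q / 4 := by
            rw [hεdef]
            have h54 : (q / 4) * f t ≤ (q / 4) * 1 :=
              mul_le_mul_of_nonneg_left hft_le1 (by linarith)
            linarith
          linarith [hFm ▸ (le_trans hsum_le (le_of_le_of_eq (le_of_eq hrefl) rfl))]
      -- two-term bound
      have hb2 := pbCDF_bound2 h0 h1 x j (N + 1) t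
      rw [← hx'def] at hb2
      rw [← hrdef, ← hP0def, ← hFdef] at hb2
      have e1 : P0 * F t ≤ P0 * 1 :=
        mul_le_mul_of_nonneg_left hFt_le1 hP0nn
      have hP0le1 : P0 ≤ 1 := by linarith
      have e2 : (1 - P0) * F (t - 1) ≤ 1 * F (t - 1) :=
        mul_le_mul_of_nonneg_right (by linarith) hFt1nn
      linarith
  -- conclude on quantiles
  set S' : Set ℤ := {u : ℤ | q ≤ pbCDF p x' u} with hS'def
  have hS'ne : S'.Nonempty := by
    refine ⟨((∑ n, x' n : ℕ) : ℤ), ?_⟩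
    rw [hS'def]
    show q ≤ pbCDF p x' _
    rw [pbCDF_of_ge p x' le_rfl]
    linarith
  have hq' : pbQuantile p x' q = sInf S' := rfl
  rw [htq, hq']
  apply le_csInf hS'ne
  intro u hu
  rw [hS'def, Set.mem_setOf_eq] at hu
  by_contra hcon
  push_neg at hcon
  have hut : u ≤ t := by omega
  have : pbCDF p x' u ≤ pbCDF p x' t := pbCDF_mono h0 h1 x' hut
  linarith
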